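/- (Theorem 3.5: general correctness of the GPK algorithm for the Generalised Deutsch–Jozsa problem.) Let n ≥ 1 and let f : 𝔽₂ⁿ → 𝔽₂ᵐ satisfy the promise that either (i) f is constant, or (ii) f is balanced, i.e. there are f₁, f₂ ∈ 𝔽₂ᵐ with f₁ ≠ f₂ such that f takes only the values f₁ and f₂, each on exactly 2^(n−1) inputs. Then f is constant if and only if for every i ∈ Fin m the sum Σ_{x ∈ 𝔽₂ⁿ} (−1)^(f(x)·e_i) is nonzero; moreover if f is constant each such sum equals ±2ⁿ, and if f is balanced there exists i ∈ Fin m for which the sum equals 0. -/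

import Mathlib

/-- The sign `(−1)^a ∈ ℂ` associated to a bit `a ∈ 𝔽₂`. -/
noncomputable def sgn (a : ZMod 2) : ℂ := (-1 : ℂ) ^ a.val

/-- The pairing `x·z = Σᵢ xᵢ·zᵢ ∈ 𝔽₂` of two binary strings. -/
def dotp {k : ℕ} (x z : Fin k → ZMod 2) : ZMod 2 := ∑ i, x i * z i

/-- The `i`-th standard basis vector of `𝔽₂ᵏ`. -/
def stdBasis {k : ℕ} (i : Fin k) : Fin k → ZMod 2 :=
  fun j => if j = i then 1 else 0

/-- `f` is balanced: it takes exactly two distinct values `f₁ ≠ f₂`, each on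
exactly `2^(n−1)` inputs. -/
def IsBalancedFn {n m : ℕ} (f : (Fin n → ZMod 2) → (Fin m → ZMod 2)) : Prop :=
  ∃ f₁ f₂ : Fin m → ZMod 2, f₁ ≠ f₂ ∧ (∀ x, f x = f₁ ∨ f x = f₂) ∧
    (Finset.univ.filter (fun x : Fin n → ZMod 2 => f x = f₁)).card = 2 ^ (n - 1) ∧
    (Finset.univ.filter (fun x : Fin n → ZMod 2 => f x = f₂)).card = 2 ^ (n - 1)

lemma dotp_stdBasis {k : ℕ} (v : Fin k → ZMod 2) (i : Fin k) :
    dotp v (stdBasis i) = v i := by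
  simp [dotp, stdBasis, mul_ite]

lemma sgn_cases (a : ZMod 2) : sgn a = 1 ∨ sgn a = -1 := by
  fin_cases a <;> simp [sgn, ZMod.val_one, ZMod.val]

lemma sgn_add_sgn (a b : ZMod 2) (h : a ≠ b) : sgn a + sgn b = 0 := by
  fin_cases a <;> fin_cases b <;> simp_all [sgn, ZMod.val_one, ZMod.val] <;> exact h rfl

/-- Theorem 3.5: general correctness of the GPK algorithm for the Generalised
Deutsch–Jozsa problem.  Under the promise, `f` is constant iff all the sums
`Σ_x (−1)^(f(x)·e_i)` are nonzero; in the constant case each sum is `±2ⁿ`, and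
in the balanced case some sum equals `0`. -/
theorem gpk_deutsch_jozsa_general {n m : ℕ} (hn : 1 ≤ n)
    (f : (Fin n → ZMod 2) → (Fin m → ZMod 2))
    (hprom : (∃ c, ∀ x, f x = c) ∨ IsBalancedFn f) :
    ((∃ c, ∀ x, f x = c) ↔
      ∀ i : Fin m,
        (∑ x : Fin n → ZMod 2, sgn (dotp (f x) (stdBasis i))) ≠ 0) ∧
    ((∃ c, ∀ x, f x = c) →
      ∀ i : Fin m,
        (∑ x : Fin n → ZMod 2, sgn (dotp (f x) (stdBasis i))) = 2 ^ n ∨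
        (∑ x : Fin n → ZMod 2, sgn (dotp (f x) (stdBasis i))) = -(2 ^ n)) ∧
    (IsBalancedFn f →
      ∃ i : Fin m,
        (∑ x : Fin n → ZMod 2, sgn (dotp (f x) (stdBasis i))) = 0) := by
  have hcard : Fintype.card (Fin n → ZMod 2) = 2 ^ n := by
    simp [Fintype.card_fun]
  have hconst : (∃ c, ∀ x, f x = c) → ∀ i : Fin m,
      (∑ x : Fin n → ZMod 2, sgn (dotp (f x) (stdBasis i))) = 2 ^ n ∨
      (∑ x : Fin n → ZMod 2, sgn (dotp (f x) (stdBasis i))) = -(2 ^ n) := by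
    rintro ⟨c, hc⟩ i
    have : (∑ x : Fin n → ZMod 2, sgn (dotp (f x) (stdBasis i)))
        = (2 ^ n : ℂ) * sgn (c i) := by
      rw [Finset.sum_congr rfl (fun x _ => by rw [hc x, dotp_stdBasis])]
      simp [Finset.sum_const, hcard, mul_comm]
    rcases sgn_cases (c i) with h | h <;> rw [this, h] <;> simp
  have hbal : IsBalancedFn f → ∃ i : Fin m,
      (∑ x : Fin n → ZMod 2, sgn (dotp (f x) (stdBasis i))) = 0 := by
    rintro ⟨f₁, f₂, hne, hval, h₁, h₂⟩
    obtain ⟨i, hi⟩ : ∃ i, f₁ i ≠ f₂ i := by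
      by_contra h
      push_neg at h
      exact hne (funext h)
    refine ⟨i, ?_⟩
    have hsplit := Finset.sum_filter_add_sum_filter_not Finset.univ
      (fun x => f x = f₁) (fun x => sgn (dotp (f x) (stdBasis i)))
    have e₁ : ∑ x ∈ Finset.univ.filter (fun x => f x = f₁),
        sgn (dotp (f x) (stdBasis i)) = (2 ^ (n-1) : ℕ) * sgn (f₁ i) := by
      rw [Finset.sum_congr rfl (fun x hx => by
        rw [(Finset.mem_filter.mp hx).2, dotp_stdBasis])]
      simp [Finset.sum_const, h₁, mul_comm]
    have hfilt : Finset.univ.filter (fun x => ¬ f x = f₁)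
        = Finset.univ.filter (fun x => f x = f₂) := by
      ext x
      simp only [Finset.mem_filter, Finset.mem_univ, true_and]
      constructor
      · intro h; rcases hval x with h' | h' <;> [exact absurd h' h; exact h']
      · intro h h'; exact hne (h'.symm.trans h)
    have e₂ : ∑ x ∈ Finset.univ.filter (fun x => ¬ f x = f₁),
        sgn (dotp (f x) (stdBasis i)) = (2 ^ (n-1) : ℕ) * sgn (f₂ i) := by
      rw [hfilt, Finset.sum_congr rfl (fun x hx => by
        rw [(Finset.mem_filter.mp hx).2, dotp_stdBasis])]
      simp [Finset.sum_const, h₂, mul_comm]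
    rw [← hsplit, e₁, e₂, ← mul_add, sgn_add_sgn _ _ hi, mul_zero]
  refine ⟨⟨fun hc i hzero => ?_, fun hall => ?_⟩, hconst, hbal⟩
  · have hne2 : (2 : ℂ) ^ n ≠ 0 := pow_ne_zero n two_ne_zero
    rcases hconst hc i with h | h <;> rw [hzero] at h
    · exact hne2 h.symm
    · exact hne2 (neg_eq_zero.mp h.symm)
  · rcases hprom with h | h
    · exact h
    · obtain ⟨i, hi⟩ := hbal h
      exact absurd hi (hall i)
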